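/- Let p be an odd prime and let η ∈ ℂ be a primitive (p−1)-th root of unity. Then |Σ_{ℓ=1}^{p−2} β_ℓ(p−1)| ≤ 2^{ω(p−1)} · φ(p−1), where β_ℓ(p−1) = Σ_{1≤i≤p−1, i odd, gcd(i,p−1)>1} η^{iℓ}. -/

import Mathlib

open Finset

lemma aux_le_pow_mul_totient (n : ℕ) : n ≤ 2 ^ n.primeFactors.card * n.totient := by
  rcases Nat.eq_zero_or_pos n with rfl | hn
  · simp
  have h := Nat.totient_mul_prod_primeFactors n
  have hprodpos : 0 < ∏ p ∈ n.primeFactors, (p - 1) :=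
    Finset.prod_pos fun p hp => by
      have := (Nat.prime_of_mem_primeFactors hp).two_le; omega
  have hle : ∏ p ∈ n.primeFactors, p ≤ 2 ^ n.primeFactors.card * ∏ p ∈ n.primeFactors, (p - 1) := by
    rw [← Finset.prod_const, ← Finset.prod_mul_distrib]
    refine Finset.prod_le_prod' fun p hp => ?_
    have := (Nat.prime_of_mem_primeFactors hp).two_le; omega
  have h2 : n * ∏ p ∈ n.primeFactors, (p - 1) ≤
      (2 ^ n.primeFactors.card * n.totient) * ∏ p ∈ n.primeFactors, (p - 1) := by
    calc n * ∏ p ∈ n.primeFactors, (p - 1) = n.totient * ∏ p ∈ n.primeFactors, p := h.symm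
    _ ≤ n.totient * (2 ^ n.primeFactors.card * ∏ p ∈ n.primeFactors, (p - 1)) :=
        Nat.mul_le_mul_left _ hle
    _ = (2 ^ n.primeFactors.card * n.totient) * ∏ p ∈ n.primeFactors, (p - 1) := by ring
  exact Nat.le_of_mul_le_mul_right h2 hprodpos

theorem stmt9 (p : ℕ) (hp : p.Prime) (hp2 : p ≠ 2)
    (η : ℂ) (hη : IsPrimitiveRoot η (p - 1)) :
    ‖(∑ ℓ ∈ Finset.Icc 1 (p - 2),
        ∑ i ∈ (Finset.Icc 1 (p - 1)).filter (fun i => Odd i ∧ 1 < Nat.gcd i (p - 1)),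
          η ^ (i * ℓ))‖
      ≤ 2 ^ (p - 1).primeFactors.card * ((p - 1).totient : ℝ) := by
  have hp3 : 3 ≤ p := by
    have := hp.two_le; rcases Nat.lt_or_ge p 3 with h | h
    · interval_cases p <;> simp_all
    · exact h
  have hpodd : Odd p := hp.odd_of_ne_two hp2
  have hpeven : Even (p - 1) := Nat.Odd.sub_odd hpodd odd_one
  set S := (Finset.Icc 1 (p - 1)).filter (fun i => Odd i ∧ 1 < Nat.gcd i (p - 1)) with hS
  have key : ∀ i ∈ S, ∑ ℓ ∈ Finset.Icc 1 (p - 2), η ^ (i * ℓ) = -1 := by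
    intro i hi
    simp only [hS, Finset.mem_filter, Finset.mem_Icc] at hi
    obtain ⟨⟨hi1, hi2⟩, hiodd, _⟩ := hi
    have hx1 : η ^ i ≠ 1 := by
      intro h
      have hdvd : (p - 1) ∣ i := (hη.pow_eq_one_iff_dvd i).mp h
      have hle : p - 1 ≤ i := Nat.le_of_dvd (by omega) hdvd
      have : i = p - 1 := by omega
      rw [this] at hiodd
      exact (Nat.not_odd_iff_even.mpr hpeven) hiodd
    have hxpow : (η ^ i) ^ (p - 1) = 1 := by
      rw [← pow_mul, mul_comm, pow_mul, hη.pow_eq_one, one_pow]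
    have hgeom : ∑ ℓ ∈ Finset.range (p - 1), (η ^ i) ^ ℓ = 0 := by
      rw [geom_sum_eq hx1, hxpow, sub_self, zero_div]
    have hsplit : ∑ ℓ ∈ Finset.range (p - 1), (η ^ i) ^ ℓ
        = (η ^ i) ^ 0 + ∑ ℓ ∈ Finset.Ico 1 (p - 1), (η ^ i) ^ ℓ := by
      rw [Finset.range_eq_Ico, Finset.sum_eq_sum_Ico_succ_bot (by omega)]
    have hIcc : Finset.Icc 1 (p - 2) = Finset.Ico 1 (p - 1) := by
      ext x; simp only [Finset.mem_Icc, Finset.mem_Ico]; omega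
    have : ∑ ℓ ∈ Finset.Ico 1 (p - 1), (η ^ i) ^ ℓ = -1 := by
      rw [hsplit] at hgeom
      rw [pow_zero] at hgeom
      linear_combination hgeom
    rw [hIcc]
    calc ∑ ℓ ∈ Finset.Ico 1 (p - 1), η ^ (i * ℓ)
        = ∑ ℓ ∈ Finset.Ico 1 (p - 1), (η ^ i) ^ ℓ := by
          refine Finset.sum_congr rfl fun ℓ _ => ?_; rw [pow_mul]
      _ = -1 := this
  have hswap : (∑ ℓ ∈ Finset.Icc 1 (p - 2), ∑ i ∈ S, η ^ (i * ℓ))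
      = ∑ i ∈ S, ∑ ℓ ∈ Finset.Icc 1 (p - 2), η ^ (i * ℓ) := Finset.sum_comm
  rw [hswap, Finset.sum_congr rfl key, Finset.sum_const, nsmul_eq_mul, mul_neg_one, norm_neg]
  have habs : ‖(S.card : ℂ)‖ = (S.card : ℝ) := by
    rw [Complex.norm_natCast]
  rw [habs]
  have hcard : S.card ≤ p - 1 := by
    calc S.card ≤ (Finset.Icc 1 (p - 1)).card := Finset.card_filter_le _ _
      _ = p - 1 := by rw [Nat.card_Icc]; omega
  have hfin : S.card ≤ 2 ^ (p - 1).primeFactors.card * (p - 1).totient :=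
    hcard.trans (aux_le_pow_mul_totient (p - 1))
  calc (S.card : ℝ) ≤ ((2 ^ (p - 1).primeFactors.card * (p - 1).totient : ℕ) : ℝ) := by
        exact_mod_cast hfin
    _ = 2 ^ (p - 1).primeFactors.card * ((p - 1).totient : ℝ) := by push_cast; ring
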